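/- Let n ≥ 1 and let h ∈ ℤ[x_1, …, x_n] be a nonzero polynomial that is homogeneous of degree n with respect to the grading in which the variable x_i has degree i. Let k be the pseudo-degree of h, that is, the total degree of h when every variable x_i is assigned degree 1. Then 1 ≤ k ≤ n, and the homogeneous component of weighted degree n − k (with respect to the grading in which x_i has degree i) of the substituted polynomial h(1 + x_1, x_1 + x_2, …, x_{n-1} + x_n) is nonzero; in particular this substituted polynomial is not homogeneous of weighted degree n. -/

import Mathlib

set_option maxHeartbeats 1000000


open MvPolynomial

/-- The shift substitution on `ℤ[x_1, …, x_n]` (variable `i : Fin n` represents `x_{i+1}`),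
sending `x_i ↦ x_{i-1} + x_i` with the convention `x_0 = 1`. -/
noncomputable def shiftSub (n : ℕ) :
    MvPolynomial (Fin n) ℤ →ₐ[ℤ] MvPolynomial (Fin n) ℤ :=
  aeval (fun i : Fin n =>
    (if (i : ℕ) = 0 then 1
     else X (⟨(i : ℕ) - 1, Nat.lt_of_le_of_lt (Nat.sub_le _ _) i.2⟩ : Fin n)) + X i)

namespace ShiftAux

variable {n : ℕ}

/-- weight function -/
noncomputable def wt (n : ℕ) (d : Fin n →₀ ℕ) : ℕ :=
  Finsupp.weight (fun i : Fin n => (i : ℕ) + 1) d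

lemma wt_add (a b : Fin n →₀ ℕ) : wt n (a + b) = wt n a + wt n b := by
  simp [wt, map_add]

lemma wt_single (a : Fin n) (b : ℕ) : wt n (Finsupp.single a b) = b * ((a : ℕ) + 1) := by
  simp [wt, Finsupp.weight_apply, Finsupp.sum_single_index, smul_eq_mul]

/-- downshift of one variable -/
noncomputable def eDown (n : ℕ) (i : Fin n) : Fin n →₀ ℕ :=
  if (i : ℕ) = 0 then 0
  else Finsupp.single (⟨(i : ℕ) - 1, Nat.lt_of_le_of_lt (Nat.sub_le _ _) i.2⟩ : Fin n) 1

lemma wt_eDown (i : Fin n) : wt n (eDown n i) = (i : ℕ) := by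
  unfold eDown
  by_cases h : (i : ℕ) = 0
  · simp [h, wt]
  · rw [if_neg h, wt_single]
    simp
    omega

/-- downshift on exponents -/
noncomputable def eMap (n : ℕ) (d : Fin n →₀ ℕ) : Fin n →₀ ℕ :=
  d.sum fun i e => e • eDown n i

lemma eMap_zero : eMap n 0 = 0 := Finsupp.sum_zero_index

lemma eMap_add_single (a : Fin n) (b : ℕ) (f : Fin n →₀ ℕ) :
    eMap n (Finsupp.single a b + f) = b • eDown n a + eMap n f := by
  unfold eMap
  rw [Finsupp.sum_add_index' (h := fun i e => e • eDown n i) (fun i => zero_smul ℕ _)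
      (fun i b₁ b₂ => add_smul b₁ b₂ _),
    Finsupp.sum_single_index (h := fun i e => e • eDown n i) (zero_smul ℕ _)]

lemma degree_add' (a b : Fin n →₀ ℕ) :
    Finsupp.degree (a + b) = Finsupp.degree a + Finsupp.degree b := by
  simp only [Finsupp.degree_eq_weight_one, map_add]

lemma degree_single' (a : Fin n) (b : ℕ) : Finsupp.degree (Finsupp.single a b) = b := by
  simp only [Finsupp.degree_eq_weight_one]
  rw [Finsupp.weight_apply, Finsupp.sum_single_index] <;> simp

lemma wt_eMap_add_degree (d : Fin n →₀ ℕ) :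
    wt n (eMap n d) + Finsupp.degree d = wt n d := by
  induction d using Finsupp.induction with
  | zero => simp [eMap_zero, wt]
  | single_add a b f ha hb ih =>
    rw [eMap_add_single, wt_add, wt_add, wt_single, degree_add', degree_single']
    have h1 : wt n (b • eDown n a) = b * (a : ℕ) := by
      unfold wt
      rw [map_nsmul, smul_eq_mul]
      rw [show Finsupp.weight (fun i : Fin n => (i : ℕ) + 1) (eDown n a) = wt n (eDown n a) from rfl,
        wt_eDown]
    rw [h1]
    have : b * ((a : ℕ) + 1) = b * (a : ℕ) + b := by ring
    omega

lemma eMap_apply (d : Fin n →₀ ℕ) (j : Fin n) (hj : (j : ℕ) ≠ 0) :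
    eMap n d ⟨(j : ℕ) - 1, Nat.lt_of_le_of_lt (Nat.sub_le _ _) j.2⟩ = d j := by
  induction d using Finsupp.induction with
  | zero => simp [eMap_zero]
  | single_add a b f ha hb ih =>
    rw [eMap_add_single]
    rw [Finsupp.add_apply, Finsupp.add_apply, Finsupp.smul_apply, ih, smul_eq_mul]
    congr 1
    unfold eDown
    by_cases h : (a : ℕ) = 0
    · rw [if_pos h]
      rw [Finsupp.single_apply, if_neg (by intro hh; apply hj; rw [← hh]; exact h)]
      simp
    · rw [if_neg h, Finsupp.single_apply, Finsupp.single_apply]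
      by_cases haj : a = j
      · rw [if_pos (by subst haj; rfl), if_pos haj]
        omega
      · rw [if_neg ?_, if_neg haj]
        · simp
        · intro hc
          apply haj
          have : (a : ℕ) - 1 = (j : ℕ) - 1 := congrArg Fin.val hc
          exact Fin.ext (by omega)

lemma eMap_inj (hn : 1 ≤ n) {d d' : Fin n →₀ ℕ}
    (hdeg : Finsupp.degree d = Finsupp.degree d') (he : eMap n d = eMap n d') : d = d' := by
  have key : ∀ j : Fin n, (j : ℕ) ≠ 0 → d j = d' j := by
    intro j hj
    rw [← eMap_apply d j hj, ← eMap_apply d' j hj, he]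
  ext j
  by_cases hj : (j : ℕ) = 0
  · have hsum : ∀ e : Fin n →₀ ℕ, Finsupp.degree e = ∑ i : Fin n, e i := by
      intro e
      rw [show Finsupp.degree e = e.sum (fun _ m => m) from rfl]
      exact Finsupp.sum_fintype _ _ fun _ => rfl
    rw [hsum, hsum] at hdeg
    rw [← Finset.add_sum_erase _ _ (Finset.mem_univ j),
      ← Finset.add_sum_erase _ _ (Finset.mem_univ j)] at hdeg
    have : ∑ i ∈ Finset.univ.erase j, d i = ∑ i ∈ Finset.univ.erase j, d' i := by
      apply Finset.sum_congr rfl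
      intro i hi
      apply key
      intro hc
      exact (Finset.mem_erase.mp hi).1 (Fin.ext (by omega))
    omega
  · exact key j hj

/-- Key predicate: `a` is the unique monomial of minimal weight in `p`, with coefficient 1. -/
def Good (n : ℕ) (a : Fin n →₀ ℕ) (p : MvPolynomial (Fin n) ℤ) : Prop :=
  coeff a p = 1 ∧ ∀ m, coeff m p ≠ 0 → wt n a ≤ wt n m ∧ (wt n m = wt n a → m = a)

lemma good_monomial (a : Fin n →₀ ℕ) : Good n a (monomial a 1) := by
  constructor
  · simp [coeff_monomial]
  · intro m hm
    have : m = a := by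
      by_contra hc
      rw [coeff_monomial, if_neg (fun h => hc h.symm)] at hm
      exact hm rfl
    subst this
    exact ⟨le_rfl, fun _ => rfl⟩

lemma good_mul {a b : Fin n →₀ ℕ} {p q : MvPolynomial (Fin n) ℤ}
    (hp : Good n a p) (hq : Good n b q) : Good n (a + b) (p * q) := by
  constructor
  · rw [coeff_mul]
    have hz : ∀ x ∈ Finset.HasAntidiagonal.antidiagonal (a + b), x ≠ (a, b) →
        coeff x.1 p * coeff x.2 q = 0 := by
      rintro ⟨u, v⟩ hx hne
      rw [Finset.HasAntidiagonal.mem_antidiagonal] at hx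
      by_contra hc
      have hu : coeff u p ≠ 0 := fun h => hc (by simp [h])
      have hv : coeff v q ≠ 0 := fun h => hc (by simp [h])
      have h1 := (hp.2 u hu)
      have h2 := (hq.2 v hv)
      have hw : wt n u + wt n v = wt n a + wt n b := by
        rw [← wt_add, ← wt_add, hx]
      have hu' : u = a := h1.2 (by omega)
      have hv' : v = b := h2.2 (by omega)
      exact hne (by rw [hu', hv'])
    rw [Finset.sum_eq_single_of_mem (a, b) (Finset.HasAntidiagonal.mem_antidiagonal.mpr rfl) hz, hp.1, hq.1,
      one_mul]
  · intro m hm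
    rw [coeff_mul] at hm
    obtain ⟨⟨u, v⟩, hx, hne⟩ := Finset.exists_ne_zero_of_sum_ne_zero hm
    rw [Finset.HasAntidiagonal.mem_antidiagonal] at hx
    have hu : coeff u p ≠ 0 := fun h => hne (by simp [h])
    have hv : coeff v q ≠ 0 := fun h => hne (by simp [h])
    have h1 := hp.2 u hu
    have h2 := hq.2 v hv
    have hw : wt n m = wt n u + wt n v := by rw [← wt_add, hx]
    constructor
    · rw [wt_add, hw]; omega
    · intro heq
      rw [wt_add] at heq
      have hu' : u = a := h1.2 (by omega)
      have hv' : v = b := h2.2 (by omega)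
      rw [← hx, hu', hv']

lemma good_pow {a : Fin n →₀ ℕ} {p : MvPolynomial (Fin n) ℤ} (hp : Good n a p) (b : ℕ) :
    Good n (b • a) (p ^ b) := by
  induction b with
  | zero =>
    have := good_monomial (n := n) (0 : Fin n →₀ ℕ)
    rw [monomial_zero'] at this
    simpa [pow_zero, zero_smul] using this
  | succ b ih =>
    rw [pow_succ, succ_nsmul]
    exact good_mul ih hp

lemma good_two_monomials {a c : Fin n →₀ ℕ} (h : wt n a < wt n c) :
    Good n a (monomial a 1 + monomial c (1 : ℤ)) := by
  have hac : a ≠ c := fun hh => by rw [hh] at h; omega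
  constructor
  · rw [coeff_add, coeff_monomial, coeff_monomial, if_pos rfl, if_neg (fun hh => hac hh.symm),
      add_zero]
  · intro m hm
    have : m = a ∨ m = c := by
      by_contra hc
      push_neg at hc
      rw [coeff_add, coeff_monomial, coeff_monomial, if_neg (fun hh => hc.1 hh.symm),
        if_neg (fun hh => hc.2 hh.symm)] at hm
      exact hm (by ring)
    rcases this with rfl | rfl
    · exact ⟨le_rfl, fun _ => rfl⟩
    · exact ⟨le_of_lt h, fun hh => absurd hh (by omega)⟩

lemma good_shift_X (i : Fin n) : Good n (eDown n i) (shiftSub n (X i)) := by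
  rw [shiftSub, aeval_X]
  have hlow : (if (i : ℕ) = 0 then (1 : MvPolynomial (Fin n) ℤ)
      else X (⟨(i : ℕ) - 1, Nat.lt_of_le_of_lt (Nat.sub_le _ _) i.2⟩ : Fin n))
      = monomial (eDown n i) 1 := by
    unfold eDown
    by_cases h : (i : ℕ) = 0
    · rw [if_pos h, if_pos h, monomial_zero']; simp
    · rw [if_neg h, if_neg h, X]
  rw [hlow, X]
  apply good_two_monomials
  rw [wt_eDown, wt_single]
  omega

lemma good_shift_monomial (d : Fin n →₀ ℕ) :
    Good n (eMap n d) (shiftSub n (monomial d 1)) := by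
  induction d using Finsupp.induction with
  | zero =>
    rw [eMap_zero, monomial_zero']
    have := good_monomial (n := n) (0 : Fin n →₀ ℕ)
    rw [monomial_zero'] at this
    simpa [map_one] using this
  | single_add a b f ha hb ih =>
    have : (monomial (Finsupp.single a b + f) (1 : ℤ))
        = (X a) ^ b * monomial f 1 := by
      rw [X_pow_eq_monomial, monomial_mul, one_mul]
    rw [this, map_mul, map_pow, eMap_add_single]
    exact good_mul (good_pow (good_shift_X a) b) ih

end ShiftAux

open ShiftAux in
/-- Let `h ∈ ℤ[x_1, …, x_n]` be nonzero and homogeneous of weighted degree `n`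
(where `x_i` has weight `i`), and let `k` be its pseudo-degree (total degree when
every variable has degree 1).  Then `1 ≤ k ≤ n`, the homogeneous component of
weighted degree `n - k` of `h(1 + x_1, x_1 + x_2, …, x_{n-1} + x_n)` is nonzero,
and in particular the substituted polynomial is not weighted-homogeneous of
degree `n`. -/
theorem shifted_polynomial_not_homogeneous (n : ℕ) (hn : 1 ≤ n)
    (h : MvPolynomial (Fin n) ℤ) (hne : h ≠ 0)
    (hhom : h.IsWeightedHomogeneous (fun i : Fin n => (i : ℕ) + 1) n) :
    1 ≤ h.totalDegree ∧ h.totalDegree ≤ n ∧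
    weightedHomogeneousComponent (fun i : Fin n => (i : ℕ) + 1)
      (n - h.totalDegree) (shiftSub n h) ≠ 0 ∧
    ¬ (shiftSub n h).IsWeightedHomogeneous (fun i : Fin n => (i : ℕ) + 1) n := by
  have hsupp : h.support.Nonempty := support_nonempty.mpr hne
  obtain ⟨d0, hd0, hdeg0⟩ :=
    Finset.exists_mem_eq_sup h.support hsupp (fun s : Fin n →₀ ℕ => s.sum fun _ e => e)
  have hdeg0' : Finsupp.degree d0 = h.totalDegree := hdeg0.symm
  have hc0 : coeff d0 h ≠ 0 := mem_support_iff.mp hd0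
  have hw0 : wt n d0 = n := hhom hc0
  -- 1 ≤ k
  have hd0ne : d0 ≠ 0 := by
    intro hz
    rw [hz] at hw0
    simp only [wt, map_zero] at hw0
    omega
  have hk1 : 1 ≤ h.totalDegree := by
    have h1 : Finsupp.degree d0 ≠ 0 := fun hz => hd0ne ((Finsupp.degree_eq_zero_iff d0).mp hz)
    omega
  -- k ≤ n
  have hdegwt : ∀ d : Fin n →₀ ℕ, Finsupp.degree d ≤ wt n d := by
    intro d
    rw [show wt n d = ∑ i ∈ d.support, d i • ((i : ℕ) + 1) from Finsupp.weight_apply _ d]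
    apply Finset.sum_le_sum
    intro i _
    rw [smul_eq_mul]
    exact Nat.le_mul_of_pos_right _ (by omega)
  have hkn : h.totalDegree ≤ n := by
    apply Finset.sup_le
    intro d hd
    calc (d.sum fun _ e => e) = Finsupp.degree d := rfl
      _ ≤ wt n d := hdegwt d
      _ = n := hhom (mem_support_iff.mp hd)
  set k := h.totalDegree with hkdef
  set e0 := eMap n d0 with he0
  have hwe0 : wt n e0 + k = n := by
    have h1 := wt_eMap_add_degree (n := n) d0
    rw [hdeg0', hw0] at h1
    exact h1
  -- the coefficient computation
  have hC : ∀ c : ℤ, shiftSub n (C c) = C c := by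
    intro c
    have := (shiftSub n).commutes c
    rwa [MvPolynomial.algebraMap_eq] at this
  have hsplit : shiftSub n h = ∑ d ∈ h.support, C (coeff d h) * shiftSub n (monomial d 1) := by
    conv_lhs => rw [h.as_sum]
    rw [map_sum]
    apply Finset.sum_congr rfl
    intro d _
    rw [show (monomial d (coeff d h) : MvPolynomial (Fin n) ℤ)
        = C (coeff d h) * monomial d 1 by rw [C_mul_monomial, mul_one]]
    rw [map_mul, hC]
  have hcoeff : coeff e0 (shiftSub n h) = coeff d0 h := by
    rw [hsplit, coeff_sum]
    rw [Finset.sum_eq_single_of_mem d0 hd0 ?_]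
    · rw [coeff_C_mul, (good_shift_monomial d0).1, mul_one]
    · intro d hd hne'
      rw [coeff_C_mul]
      suffices hz : coeff e0 (shiftSub n (monomial d 1)) = 0 by rw [hz, mul_zero]
      by_contra hcz
      have good := good_shift_monomial (n := n) d
      have hle := (good.2 e0 hcz).1
      have h1 : wt n (eMap n d) + Finsupp.degree d = n := by
        rw [wt_eMap_add_degree]
        exact hhom (mem_support_iff.mp hd)
      have h2 : Finsupp.degree d ≤ k := le_totalDegree hd
      have heq : wt n e0 = wt n (eMap n d) := by omega
      have hdd : Finsupp.degree d = k := by omega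
      have hee : e0 = eMap n d := (good.2 e0 hcz).2 heq
      exact hne' (eMap_inj hn (hdd.trans hdeg0'.symm) hee.symm)
  have hwe0' : Finsupp.weight (fun i : Fin n => (i : ℕ) + 1) e0 = n - k := by
    have : wt n e0 = n - k := by omega
    exact this
  refine ⟨hk1, hkn, ?_, ?_⟩
  · intro hzero
    have hcc : coeff e0 (weightedHomogeneousComponent (fun i : Fin n => (i : ℕ) + 1)
        (n - k) (shiftSub n h)) = coeff d0 h := by
      rw [coeff_weightedHomogeneousComponent, if_pos hwe0', hcoeff]
    rw [hzero, coeff_zero] at hcc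
    exact hc0 hcc.symm
  · intro hcon
    have hcne : coeff e0 (shiftSub n h) ≠ 0 := by rw [hcoeff]; exact hc0
    have := hcon hcne
    have : wt n e0 = n := this
    omega
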